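/- Let (q,n) be a Dickson pair, let p be a prime and m ≥ 1 an integer with p^m dividing n, and let t ≥ 1. If p^m divides (q^t - 1)/(q - 1) = ∑_{i=0}^{t-1} q^i, then p^m divides t. -/

import Mathlib

/-- A pair `(q, n)` of natural numbers is a Dickson pair if `q = p^l` for some prime `p`
and integer `l ≥ 1`, every prime divisor of `n` divides `q - 1`, and if `q ≡ 3 (mod 4)`
then `4` does not divide `n`. -/
def DicksonPair (q n : ℕ) : Prop :=
  (∃ p l : ℕ, p.Prime ∧ 1 ≤ l ∧ q = p ^ l) ∧
  (∀ r : ℕ, r.Prime → r ∣ n → r ∣ q - 1) ∧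
  (q % 4 = 3 → ¬ (4 ∣ n))

/-- LTE-based computation of the multiplicity of the geometric sum. -/
lemma aux_geom_sum_emultiplicity (p q t : ℕ) (hp : p.Prime) (hq2 : 2 ≤ q)
    (hdvd1 : (p : ℤ) ∣ (q : ℤ) - 1) (h4 : p = 2 → (4 : ℤ) ∣ (q : ℤ) - 1)
    (hpq : ¬ (p : ℤ) ∣ (q : ℤ)) :
    emultiplicity (p : ℤ) (∑ i ∈ Finset.range t, (q : ℤ) ^ i) = emultiplicity p t := by
  have hprime : Prime (p : ℤ) := Nat.prime_iff_prime_int.mp hp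
  have hfin : FiniteMultiplicity (p : ℤ) ((q : ℤ) - 1) := by
    apply Int.finiteMultiplicity_iff.mpr
    refine ⟨by simpa using hp.ne_one, ?_⟩
    have : (2 : ℤ) ≤ (q : ℤ) := by exact_mod_cast hq2
    omega
  have key : emultiplicity (p : ℤ) ((q : ℤ) ^ t - 1 ^ t)
      = emultiplicity (p : ℤ) ((q : ℤ) - 1) + emultiplicity p t := by
    rcases eq_or_ne p 2 with rfl | hp2
    · rw [show ((2:ℕ):ℤ) = (2:ℤ) by norm_num] at hpq ⊢
      rw [show ((1:ℤ)^t) = 1^t by rfl]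
      rw [Int.two_pow_sub_pow' t (by simpa using h4 rfl) hpq]
      congr 1
      rw [show (2:ℤ) = ((2:ℕ):ℤ) by norm_num, Int.natCast_emultiplicity]
    · exact Int.emultiplicity_pow_sub_pow hp (hp.odd_of_ne_two hp2)
        (by simpa using hdvd1) hpq t
  have hfact : (q : ℤ) ^ t - 1 ^ t = ((q : ℤ) - 1) * ∑ i ∈ Finset.range t, (q : ℤ) ^ i := by
    rw [mul_comm, geom_sum_mul]; ring
  rw [hfact, emultiplicity_mul hprime, hfin.emultiplicity_eq_multiplicity] at key
  exact WithTop.add_left_cancel (WithTop.coe_ne_top) key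

/-- Let `(q, n)` be a Dickson pair, `p` a prime, `m ≥ 1` with `p^m ∣ n`, and `t ≥ 1`.
If `p^m` divides the geometric sum `∑_{i=0}^{t-1} q^i = (q^t - 1)/(q - 1)`, then
`p^m` divides `t`. -/
theorem dickson_pair_prime_pow_dvd_geom_sum_imp_dvd (q n p m t : ℕ)
    (h : DicksonPair q n) (hp : p.Prime) (hm : 1 ≤ m) (hpm : p ^ m ∣ n) (ht : 1 ≤ t)
    (hdvd : p ^ m ∣ ∑ i ∈ Finset.range t, q ^ i) : p ^ m ∣ t := by
  obtain ⟨⟨p', l, hp', hl, hq⟩, hdiv, h4n⟩ := h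
  have hq2 : 2 ≤ q := by
    rw [hq]
    calc 2 ≤ p' := hp'.two_le
    _ ≤ p' ^ l := Nat.le_self_pow (by omega) _
  have hpn : p ∣ n := dvd_trans (dvd_pow_self p (by omega)) hpm
  have hpq1 : p ∣ q - 1 := hdiv p hp hpn
  have hpq : ¬ p ∣ q := by
    intro hc
    have h1 : p ∣ q - (q - 1) := Nat.dvd_sub hc hpq1
    have : q - (q - 1) = 1 := by omega
    rw [this, Nat.dvd_one] at h1
    exact hp.one_lt.ne' h1
  have hdvd1 : (p : ℤ) ∣ (q : ℤ) - 1 := by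
    have := Int.natCast_dvd_natCast.mpr hpq1
    rwa [Nat.cast_sub (by omega), Nat.cast_one] at this
  -- main LTE case
  have main : (p = 2 → (4 : ℤ) ∣ (q : ℤ) - 1) → p ^ m ∣ t := by
    intro h4
    have hdvdZ : (p : ℤ) ^ m ∣ ∑ i ∈ Finset.range t, (q : ℤ) ^ i := by
      have := Int.natCast_dvd_natCast.mpr hdvd
      push_cast at this
      exact this
    have hle : (m : ℕ∞) ≤ emultiplicity (p : ℤ) (∑ i ∈ Finset.range t, (q : ℤ) ^ i) :=
      le_emultiplicity_of_pow_dvd hdvdZ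
    rw [aux_geom_sum_emultiplicity p q t hp hq2 hdvd1 h4 (by exact_mod_cast hpq)] at hle
    exact pow_dvd_of_le_emultiplicity hle
  rcases eq_or_ne p 2 with rfl | hp2
  · -- p = 2 : split on q % 4
    have hqodd : q % 2 = 1 := by
      rcases Nat.even_or_odd q with he | ho
      · exact absurd (even_iff_two_dvd.mp he) hpq
      · exact Nat.odd_iff.mp ho
    have hmod : q % 4 = 1 ∨ q % 4 = 3 := by omega
    rcases hmod with h1 | h3
    · apply main
      intro _
      have : (4 : ℕ) ∣ q - 1 := by omega
      have := Int.natCast_dvd_natCast.mpr this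
      rwa [Nat.cast_sub (by omega), Nat.cast_one] at this
    · -- q ≡ 3 mod 4 : then m = 1
      have hm1 : m = 1 := by
        by_contra hne
        have hm2 : 2 ≤ m := by omega
        exact h4n h3 (dvd_trans (by rw [show (4:ℕ) = 2^2 by norm_num]; exact pow_dvd_pow 2 hm2) hpm)
      subst hm1
      rw [pow_one] at hdvd ⊢
      -- sum ≡ t mod 2
      have hsum : (∑ i ∈ Finset.range t, q ^ i) % 2 = (∑ _i ∈ Finset.range t, 1) % 2 := by
        rw [Finset.sum_nat_mod, Finset.sum_congr rfl
          (fun i _ => by rw [Nat.pow_mod, hqodd, one_pow]), ← Finset.sum_nat_mod]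
      simp only [Finset.sum_const, Finset.card_range, smul_eq_mul, mul_one] at hsum
      omega
  · exact main (fun hc => absurd hc hp2)
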